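/- Let r ≥ 3, A ∈ 𝒯_r, e_0 ∈ E(A), and let t be a real number with 0 < t < 1. Then there exists an A-admissible tuple 𝔭 = (p_e)_{e∈E(A)} of positive reals with p_{e_0} = t. -/

import Mathlib

noncomputable section

/-- A plane (rooted) binary tree with leaves labeled by elements of `Fin r`. -/
inductive PTree (r : ℕ) : Type
  | leaf : Fin r → PTree r
  | node : PTree r → PTree r → PTree r

namespace PTree

variable {r : ℕ}

/-- The labels of the leaves of the tree, listed from left to right. -/
def leafLabels : PTree r → List (Fin r)
  | .leaf i => [i]
  | .node l t => l.leafLabels ++ t.leafLabels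

/-- `A ∈ 𝒯_r`: the `r` leaves of `A` are labeled bijectively by `Fin r`. -/
def IsTree (A : PTree r) : Prop :=
  A.leafLabels.Nodup ∧ A.leafLabels.length = r

/-- The label of the rightmost leaf of the tree. -/
def rightmost : PTree r → Fin r
  | .leaf i => i
  | .node _ t => t.rightmost

/-- The subtree of a tree at the address `p` (`false` = go to the left child,
`true` = go to the right child), if the address is valid. -/
def subtreeAt : PTree r → List Bool → Option (PTree r)
  | t, [] => some t
  | .leaf _, _ :: _ => none
  | .node l t, b :: p => (if b then t else l).subtreeAt p

/-- `p` is the address of an internal (non-leaf) vertex of `A`; the set of such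
addresses is `V(A)`. -/
def IsVertex (A : PTree r) (p : List Bool) : Prop :=
  ∃ l t : PTree r, A.subtreeAt p = some (.node l t)

/-- `p` is the address of the lower endpoint `d(e)` of an internal edge `e` of
`A` (an edge not adjacent to a leaf); the upper endpoint `u(e)` is at the
address `p.dropLast`.  The set of such addresses is `E(A)`. -/
def IsEdge (A : PTree r) (p : List Bool) : Prop :=
  p ≠ [] ∧ A.IsVertex p

/-- The type `E(A)` of internal edges of `A`. -/
abbrev Edge (A : PTree r) : Type := {p : List Bool // A.IsEdge p}

/-- `x_v = z_{L(v)} − z_{R(v)}` for the internal vertex `v` given as the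
subtree rooted at it (junk value `0` at leaves). -/
def xval (z : Fin r → ℂ) : PTree r → ℂ
  | .leaf _ => 0
  | .node l t => z l.rightmost - z t.rightmost

/-- The coordinate `x_v` for the vertex `v` of `A` with address `p`. -/
def xAt (A : PTree r) (z : Fin r → ℂ) (p : List Bool) : ℂ :=
  match A.subtreeAt p with
  | some t => xval z t
  | none => 0

/-- The coordinate `ζ_e = x_{d(e)} / x_{u(e)}` for the edge of `A` whose lower
endpoint has address `p` (its upper endpoint has address `p.dropLast`). -/
def zetaAt (A : PTree r) (z : Fin r → ℂ) (p : List Bool) : ℂ :=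
  xAt A z p / xAt A z p.dropLast

/-- `Leaf(e)`: the labels of the leaves descending from the vertex of `A` with
address `p`. -/
def leavesAt (A : PTree r) (p : List Bool) : List (Fin r) :=
  ((A.subtreeAt p).map leafLabels).getD []

/-- The label of the rightmost leaf descending from the vertex of `A` with
address `p`. -/
def rightmostAt (A : PTree r) (p : List Bool) : Option (Fin r) :=
  (A.subtreeAt p).map rightmost

end PTree

/-- The configuration space `X_r = {(z_1,…,z_r) ∈ ℂ^r : z_i ≠ z_j for i ≠ j}`. -/
def ConfigSpace (r : ℕ) : Set (Fin r → ℂ) :=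
  {z | ∀ i j : Fin r, i ≠ j → z i ≠ z j}

namespace PTree

variable {r : ℕ}

/-- The `A`-coordinate map `Ψ_A = (z_A, x_A, (ζ_e)_{e ∈ E(A)})`, where
`z_A = z_{r_A}` (`r_A` the rightmost leaf of `A`) and `x_A = x_{t_A}` (`t_A`
the root of `A`). -/
def psi (A : PTree r) (z : Fin r → ℂ) : ℂ × ℂ × (A.Edge → ℂ) :=
  (z A.rightmost, xval z A, fun e => A.zetaAt z e.1)

/-- The variable index type for the polynomial ring
`ℂ[z_A, x_A, ζ_e (e ∈ E(A))]`. -/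
abbrev Idx (A : PTree r) : Type := Unit ⊕ Unit ⊕ A.Edge

/-- The point of `ℂ^{Idx A}` corresponding to `w = (z_A, x_A, (ζ_e)_e)`. -/
def assign (A : PTree r) (w : ℂ × ℂ × (A.Edge → ℂ)) : A.Idx → ℂ :=
  Sum.elim (fun _ => w.1) (Sum.elim (fun _ => w.2.1) fun e => w.2.2 e)

/-- The polynomial map `Φ_A : ℂ × ℂ × ℂ^{E(A)} → ℂ^r` determined by a family
of polynomials `P`. -/
def phiMap (A : PTree r) (P : Fin r → MvPolynomial A.Idx ℂ)
    (w : ℂ × ℂ × (A.Edge → ℂ)) : Fin r → ℂ :=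
  fun i => MvPolynomial.eval (A.assign w) (P i)

/-- `Φ_A ∘ Ψ_A = id` on `X_r`. -/
def PhiPsiId (A : PTree r) (P : Fin r → MvPolynomial A.Idx ℂ) : Prop :=
  ∀ z ∈ ConfigSpace r, A.phiMap P (A.psi z) = z

/-- `Ψ_A ∘ Φ_A = id` on `ℂ × ℂ^× × (ℂ^×)^{E(A)}`. -/
def PsiPhiId (A : PTree r) (P : Fin r → MvPolynomial A.Idx ℂ) : Prop :=
  ∀ w : ℂ × ℂ × (A.Edge → ℂ), w.2.1 ≠ 0 → (∀ e, w.2.2 e ≠ 0) →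
    A.psi (A.phiMap P w) = w

end PTree

/-- The cut plane `ℂ^cut = ℂ ∖ ℝ_{≤0}`. -/
def cutPlane : Set ℂ := {w : ℂ | 0 < w.re ∨ w.im ≠ 0}

namespace PTree

variable {r : ℕ}

/-- The region `ℂ × ℂ^cut × ∏_{e ∈ E(A)} 𝔻_{p_e}^cut` in `ℂ × ℂ × ℂ^{E(A)}`. -/
def cutRegion (A : PTree r) (p : A.Edge → ℝ) : Set (ℂ × ℂ × (A.Edge → ℂ)) :=
  {w | w.2.1 ∈ cutPlane ∧ ∀ e, w.2.2 e ∈ cutPlane ∧ ‖w.2.2 e‖ < p e}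

/-- The tuple `p = (p_e)_{e∈E(A)}` is `A`-admissible:
`Φ_A(ℂ × ℂ^× × ∏_e 𝔻_{p_e}^×) ⊆ X_r`. -/
def Admissible (A : PTree r) (P : Fin r → MvPolynomial A.Idx ℂ)
    (p : A.Edge → ℝ) : Prop :=
  ∀ w : ℂ × ℂ × (A.Edge → ℂ), w.2.1 ≠ 0 →
    (∀ e, w.2.2 e ≠ 0 ∧ ‖w.2.2 e‖ < p e) →
      A.phiMap P w ∈ ConfigSpace r

/-- `U_A^𝔭 = Φ_A(ℂ × ℂ^cut × ∏_e 𝔻_{p_e}^cut)`. -/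
def UAp (A : PTree r) (P : Fin r → MvPolynomial A.Idx ℂ) (p : A.Edge → ℝ) :
    Set (Fin r → ℂ) :=
  A.phiMap P '' A.cutRegion p

/-- `U_A = ⋃ U_A^𝔭`, the union over all `A`-admissible tuples of positive
reals `𝔭`. -/
def UA (A : PTree r) (P : Fin r → MvPolynomial A.Idx ℂ) : Set (Fin r → ℂ) :=
  ⋃ (p : A.Edge → ℝ) (_ : (∀ e, 0 < p e) ∧ A.Admissible P p), A.UAp P p

end PTree


namespace PTree

variable {r : ℕ}

lemma subtreeAt_append (A : PTree r) (q q' : List Bool) :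
    A.subtreeAt (q ++ q') = (A.subtreeAt q).bind (fun s => s.subtreeAt q') := by
  induction q generalizing A with
  | nil => simp [subtreeAt]
  | cons b q ih =>
    cases A with
    | leaf i => simp [subtreeAt]
    | node l t =>
      simp only [List.cons_append, subtreeAt]
      exact ih _

lemma xAt_eq (A : PTree r) (z : Fin r → ℂ) {q : List Bool} {T : PTree r}
    (h : A.subtreeAt q = some T) : A.xAt z q = xval z T := by
  unfold xAt; rw [h]

/-- `B`-value: sum over internal vertices of products of radii along the path. -/
def Bval (p : List Bool → ℝ) : List Bool → PTree r → ℝ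
  | _, .leaf _ => 0
  | q, .node l t => 1 + p (q ++ [false]) * Bval p (q ++ [false]) l
      + p (q ++ [true]) * Bval p (q ++ [true]) t

lemma Bval_nonneg (p : List Bool → ℝ) (hp : ∀ q, 0 ≤ p q) :
    ∀ (T : PTree r) (q : List Bool), 0 ≤ Bval p q T := by
  intro T
  induction T with
  | leaf i => intro q; simp [Bval]
  | node l t ihl iht =>
    intro q
    have h1 := mul_nonneg (hp (q ++ [false])) (ihl (q ++ [false]))
    have h2 := mul_nonneg (hp (q ++ [true])) (iht (q ++ [true]))
    simp only [Bval]; linarith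

/-- The `x`-value of every child is controlled by the radius times the parent's. -/
def Good (p : List Bool → ℝ) (z : Fin r → ℂ) : List Bool → PTree r → Prop
  | _, .leaf _ => True
  | q, .node l t =>
      ‖xval z l‖ ≤ p (q ++ [false]) * ‖xval z (.node l t)‖ ∧
      ‖xval z t‖ ≤ p (q ++ [true]) * ‖xval z (.node l t)‖ ∧
      Good p z (q ++ [false]) l ∧ Good p z (q ++ [true]) t

/-- All internal `x`-values are nonzero. -/
def NZ (z : Fin r → ℂ) : PTree r → Prop
  | .leaf _ => True
  | .node l t => xval z (.node l t) ≠ 0 ∧ NZ z l ∧ NZ z t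

/-- The smallness condition at every internal vertex. -/
def Small (p : List Bool → ℝ) : List Bool → PTree r → Prop
  | _, .leaf _ => True
  | q, .node l t =>
      p (q ++ [false]) * Bval p (q ++ [false]) l
        + p (q ++ [true]) * Bval p (q ++ [true]) t < 1 ∧
      Small p (q ++ [false]) l ∧ Small p (q ++ [true]) t

/-- Core estimate: distance from any leaf to the rightmost leaf. -/
lemma core (p : List Bool → ℝ) (hp : ∀ q, 0 ≤ p q) (z : Fin r → ℂ) :
    ∀ (T : PTree r) (q : List Bool), Good p z q T →
      ∀ i ∈ T.leafLabels,
        ‖z i - z T.rightmost‖ ≤ Bval p q T * ‖xval z T‖ := by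
  intro T
  induction T with
  | leaf a =>
    intro q _ i hi
    simp only [leafLabels, List.mem_singleton] at hi
    subst hi
    simp [rightmost, Bval]
  | node l t ihl iht =>
    intro q hG i hi
    obtain ⟨g1, g2, G1, G2⟩ := hG
    have hBl := Bval_nonneg p hp l (q ++ [false])
    have hBt := Bval_nonneg p hp t (q ++ [true])
    have hpl := hp (q ++ [false])
    have hpt := hp (q ++ [true])
    have habs : (0:ℝ) ≤ ‖xval z (.node l t)‖ := norm_nonneg _
    simp only [leafLabels, List.mem_append] at hi
    simp only [rightmost, Bval]
    rcases hi with hi | hi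
    · have h1 := ihl (q ++ [false]) G1 i hi
      have h2 : Bval p (q ++ [false]) l * ‖xval z l‖
          ≤ Bval p (q ++ [false]) l * (p (q ++ [false]) * ‖xval z (.node l t)‖) :=
        mul_le_mul_of_nonneg_left g1 hBl
      have key : z i - z t.rightmost = (z i - z l.rightmost) + xval z (.node l t) := by
        simp only [xval]; ring
      rw [key]
      calc ‖(z i - z l.rightmost) + xval z (.node l t)‖
          ≤ ‖z i - z l.rightmost‖ + ‖xval z (.node l t)‖ :=
            norm_add_le _ _
        _ ≤ (1 + p (q ++ [false]) * Bval p (q ++ [false]) l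
              + p (q ++ [true]) * Bval p (q ++ [true]) t) * ‖xval z (.node l t)‖ := by
            nlinarith [mul_nonneg (mul_nonneg hpt hBt) habs]
    · have h1 := iht (q ++ [true]) G2 i hi
      have h2 : Bval p (q ++ [true]) t * ‖xval z t‖
          ≤ Bval p (q ++ [true]) t * (p (q ++ [true]) * ‖xval z (.node l t)‖) :=
        mul_le_mul_of_nonneg_left g2 hBt
      calc ‖z i - z t.rightmost‖
          ≤ Bval p (q ++ [true]) t * ‖xval z t‖ := h1
        _ ≤ (1 + p (q ++ [false]) * Bval p (q ++ [false]) l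
              + p (q ++ [true]) * Bval p (q ++ [true]) t) * ‖xval z (.node l t)‖ := by
            nlinarith [mul_nonneg (mul_nonneg hpl hBl) habs]

/-- Separation: all leaves have distinct `z`-values. -/
lemma sep (p : List Bool → ℝ) (hp : ∀ q, 0 ≤ p q) (z : Fin r → ℂ) :
    ∀ (T : PTree r) (q : List Bool), Good p z q T → NZ z T → Small p q T →
      T.leafLabels.Nodup →
      ∀ i ∈ T.leafLabels, ∀ j ∈ T.leafLabels, i ≠ j → z i ≠ z j := by
  intro T
  induction T with
  | leaf a =>
    intro q _ _ _ _ i hi j hj hij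
    simp only [leafLabels, List.mem_singleton] at hi hj
    exact absurd (hi.trans hj.symm) hij
  | node l t ihl iht =>
    intro q hG hN hS hnd i hi j hj hij
    obtain ⟨g1, g2, G1, G2⟩ := hG
    obtain ⟨hx, N1, N2⟩ := hN
    obtain ⟨hs, S1, S2⟩ := hS
    rw [leafLabels, List.nodup_append] at hnd
    obtain ⟨nd1, nd2, _⟩ := hnd
    have hBl := Bval_nonneg p hp l (q ++ [false])
    have hBt := Bval_nonneg p hp t (q ++ [true])
    have hxpos : 0 < ‖xval z (.node l t)‖ :=
      norm_pos_iff.mpr hx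
    simp only [leafLabels, List.mem_append] at hi hj
    have cross : ∀ a b : Fin r, a ∈ l.leafLabels → b ∈ t.leafLabels → z a ≠ z b := by
      intro a b ha hb heq
      have e1 : ‖z a - z l.rightmost‖
          ≤ Bval p (q ++ [false]) l * ‖xval z l‖ := core p hp z l _ G1 a ha
      have e2 : ‖z b - z t.rightmost‖
          ≤ Bval p (q ++ [true]) t * ‖xval z t‖ := core p hp z t _ G2 b hb
      have e1' : ‖z a - z l.rightmost‖
          ≤ Bval p (q ++ [false]) l * (p (q ++ [false]) * ‖xval z (.node l t)‖) :=
        e1.trans (mul_le_mul_of_nonneg_left g1 hBl)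
      have e2' : ‖z b - z t.rightmost‖
          ≤ Bval p (q ++ [true]) t * (p (q ++ [true]) * ‖xval z (.node l t)‖) :=
        e2.trans (mul_le_mul_of_nonneg_left g2 hBt)
      have key : xval z (.node l t) = (z l.rightmost - z a) + (z b - z t.rightmost) := by
        simp only [xval]; rw [heq]; ring
      have e3 : ‖xval z (.node l t)‖
          ≤ ‖z l.rightmost - z a‖ + ‖z b - z t.rightmost‖ := by
        rw [key]; exact norm_add_le _ _
      rw [norm_sub_rev] at e3
      nlinarith
    rcases hi with hi | hi <;> rcases hj with hj | hj
    · exact ihl _ G1 N1 S1 nd1 i hi j hj hij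
    · exact cross i j hi hj
    · exact fun h => cross j i hj hi h.symm
    · exact iht _ G2 N2 S2 nd2 i hi j hj hij

/-- Build `Good` and `NZ` from the `ζ`-data of the coordinate map. -/
lemma build (A : PTree r) (p : List Bool → ℝ) (hp : ∀ q, 0 ≤ p q) (z : Fin r → ℂ)
    (hz : ∀ (q : List Bool), A.IsEdge q →
      A.zetaAt z q ≠ 0 ∧ ‖A.zetaAt z q‖ < p q) :
    ∀ (T : PTree r) (q : List Bool), A.subtreeAt q = some T →
      (∀ l t : PTree r, T = .node l t → xval z T ≠ 0) → Good p z q T ∧ NZ z T := by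
  intro T
  induction T with
  | leaf a => intro q _ _; exact ⟨trivial, trivial⟩
  | node l t ihl iht =>
    intro q hq h0
    have hx : xval z (.node l t) ≠ 0 := h0 l t rfl
    have hchild : ∀ b : Bool, A.subtreeAt (q ++ [b]) = some (if b then t else l) := by
      intro b
      rw [subtreeAt_append, hq]
      simp [subtreeAt]
    -- per-child facts
    have hfact : ∀ (b : Bool) (c : PTree r), (if b then t else l) = c →
        (‖xval z c‖ ≤ p (q ++ [b]) * ‖xval z (.node l t)‖ ∧
         (∀ l' t' : PTree r, c = .node l' t' → xval z c ≠ 0)) := by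
      intro b c hc
      have hcs : A.subtreeAt (q ++ [b]) = some c := by rw [hchild b, hc]
      cases c with
      | leaf a =>
        refine ⟨?_, ?_⟩
        · simp only [xval, norm_zero]
          exact mul_nonneg (hp _) (norm_nonneg _)
        · intro l' t' h; cases h
      | node c1 c2 =>
        have hedge : A.IsEdge (q ++ [b]) := by
          refine ⟨by simp, c1, c2, hcs⟩
        obtain ⟨hz1, hz2⟩ := hz (q ++ [b]) hedge
        have hdl : (q ++ [b]).dropLast = q := by
          simpa using List.dropLast_concat (l := q) (x := b)
        have hzval : A.zetaAt z (q ++ [b])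
            = xval z (.node c1 c2) / xval z (.node l t) := by
          rw [zetaAt, xAt_eq A z hcs, hdl, xAt_eq A z hq]
        rw [hzval] at hz1 hz2
        have hxc : xval z (.node c1 c2) ≠ 0 := by
          intro h; rw [h] at hz1; simp at hz1
        have hmul : xval z (.node c1 c2)
            = (xval z (.node c1 c2) / xval z (.node l t)) * xval z (.node l t) :=
          (div_mul_cancel₀ _ hx).symm
        refine ⟨?_, fun _ _ _ => hxc⟩
        have : ‖xval z (.node c1 c2)‖
            = ‖xval z (.node c1 c2) / xval z (.node l t)‖
              * ‖xval z (.node l t)‖ := by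
          rw [← norm_mul, ← hmul]
        rw [this]
        have hxpos : 0 < ‖xval z (.node l t)‖ := norm_pos_iff.mpr hx
        exact le_of_lt (mul_lt_mul_of_pos_right hz2 hxpos)
    have hfl := hfact false l rfl
    have hft := hfact true t rfl
    have ihl' := ihl (q ++ [false]) (by simpa using hchild false) hfl.2
    have iht' := iht (q ++ [true]) (by simpa using hchild true) hft.2
    exact ⟨⟨hfl.1, hft.1, ihl'.1, iht'.1⟩, ⟨hx, ihl'.2, iht'.2⟩⟩

end PTree

namespace PTree

variable {r : ℕ}

/-- The specific radius function: `t` at `e₀`, `ε` elsewhere. -/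
def pf (e₀ : List Bool) (t ε : ℝ) : List Bool → ℝ := fun q => if q = e₀ then t else ε

variable {e₀ : List Bool} {t ε : ℝ}

lemma pf_nonneg (ht : 0 ≤ t) (hε : 0 ≤ ε) : ∀ q, 0 ≤ pf e₀ t ε q := by
  intro q; unfold pf; split <;> assumption

lemma BvalN (hε0 : 0 ≤ ε) (hε : ε ≤ 1/4) (ht0 : 0 ≤ t) :
    ∀ (T : PTree r) (q : List Bool), (∀ π : List Bool, π ≠ [] → q ++ π ≠ e₀) →
      Bval (pf e₀ t ε) q T ≤ 1 + 4*ε := by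
  intro T
  induction T with
  | leaf a => intro q _; simp only [Bval]; linarith
  | node l t' ihl iht =>
    intro q h
    have hne : ∀ b : Bool, q ++ [b] ≠ e₀ := fun b => h [b] (by simp)
    have hsub : ∀ b : Bool, ∀ π : List Bool, π ≠ [] → (q ++ [b]) ++ π ≠ e₀ := by
      intro b π _
      rw [List.append_assoc]
      exact h ([b] ++ π) (by simp)
    have hpf : ∀ b : Bool, pf e₀ t ε (q ++ [b]) = ε := by
      intro b; unfold pf; rw [if_neg (hne b)]
    have h1 := ihl (q ++ [false]) (hsub false)
    have h2 := iht (q ++ [true]) (hsub true)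
    have h1' := Bval_nonneg (pf e₀ t ε) (pf_nonneg ht0 hε0) l (q ++ [false])
    have h2' := Bval_nonneg (pf e₀ t ε) (pf_nonneg ht0 hε0) t' (q ++ [true])
    simp only [Bval, hpf]
    nlinarith

lemma no_ext_self : ∀ π : List Bool, π ≠ [] → e₀ ++ π ≠ e₀ := by
  intro π hπ h
  have := congrArg List.length h
  simp only [List.length_append] at this
  have : π.length = 0 := by omega
  exact hπ (List.length_eq_zero_iff.mp this)

lemma not_prefix_ext {q : List Bool} (h : ¬ q <+: e₀) :
    (∀ π : List Bool, π ≠ [] → q ++ π ≠ e₀) ∧ q ≠ e₀ := by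
  constructor
  · intro π _ he; exact h ⟨π, he⟩
  · intro he; exact h (he ▸ List.prefix_rfl)

lemma BvalY (hε0 : 0 ≤ ε) (hε : ε ≤ 1/4) (ht0 : 0 ≤ t) (ht1 : t ≤ 1) :
    ∀ (T : PTree r) (q : List Bool), Bval (pf e₀ t ε) q T ≤ 4 := by
  intro T
  induction T with
  | leaf a => intro q; simp [Bval]
  | node l t' ihl iht =>
    intro q
    have hBnn : ∀ (c : PTree r) (qq : List Bool), 0 ≤ Bval (pf e₀ t ε) qq c :=
      fun c qq => Bval_nonneg (pf e₀ t ε) (pf_nonneg ht0 hε0) c qq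
    have hterm : ∀ (b : Bool) (c : PTree r),
        (Bval (pf e₀ t ε) (q ++ [b]) c ≤ 4) →
        (¬ (q ++ [b]) <+: e₀ → pf e₀ t ε (q ++ [b]) * Bval (pf e₀ t ε) (q ++ [b]) c ≤ 1/2) ∧
        ((q ++ [b]) <+: e₀ → pf e₀ t ε (q ++ [b]) * Bval (pf e₀ t ε) (q ++ [b]) c ≤ 2) := by
      intro b c hY
      constructor
      · intro hnp
        obtain ⟨hext, hne⟩ := not_prefix_ext hnp
        have hpf : pf e₀ t ε (q ++ [b]) = ε := by unfold pf; rw [if_neg hne]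
        have hB := BvalN hε0 hε ht0 c (q ++ [b]) hext
        have hBn := hBnn c (q ++ [b])
        rw [hpf]; nlinarith
      · intro hpre
        by_cases he : q ++ [b] = e₀
        · have hpf : pf e₀ t ε (q ++ [b]) = t := by unfold pf; rw [if_pos he]
          have hB := BvalN hε0 hε ht0 c (q ++ [b]) (by rw [he]; exact no_ext_self)
          have hBn := hBnn c (q ++ [b])
          rw [hpf]; nlinarith
        · have hpf : pf e₀ t ε (q ++ [b]) = ε := by unfold pf; rw [if_neg he]
          have hBn := hBnn c (q ++ [b])
          rw [hpf]; nlinarith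
    have hl := hterm false l (ihl _)
    have ht' := hterm true t' (iht _)
    have hnot : ¬ ((q ++ [false]) <+: e₀ ∧ (q ++ [true]) <+: e₀) := by
      rintro ⟨h1, h2⟩
      have h3 : (q ++ [false]) <+: (q ++ [true]) :=
        List.prefix_of_prefix_length_le h1 h2 (by simp)
      have h4 : q ++ [false] = q ++ [true] := List.IsPrefix.eq_of_length h3 (by simp)
      simpa using h4
    simp only [Bval]
    by_cases hf : (q ++ [false]) <+: e₀ <;> by_cases htt : (q ++ [true]) <+: e₀
    · exact absurd ⟨hf, htt⟩ hnot
    · have := hl.2 hf; have := ht'.1 htt; linarith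
    · have := hl.1 hf; have := ht'.2 htt; linarith
    · have := hl.1 hf; have := ht'.1 htt; linarith

lemma smallAll (hε0 : 0 ≤ ε) (hε : ε ≤ 1/8) (ht0 : 0 ≤ t) (ht1 : t ≤ 1)
    (hts : t + 6*ε < 1) :
    ∀ (T : PTree r) (q : List Bool), Small (pf e₀ t ε) q T := by
  intro T
  have hε4 : ε ≤ 1/4 := by linarith
  induction T with
  | leaf a => intro q; trivial
  | node l t' ihl iht =>
    intro q
    have hBnn : ∀ (c : PTree r) (qq : List Bool), 0 ≤ Bval (pf e₀ t ε) qq c :=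
      fun c qq => Bval_nonneg (pf e₀ t ε) (pf_nonneg ht0 hε0) c qq
    have hterm : ∀ (b : Bool) (c : PTree r),
        (¬ (q ++ [b]) <+: e₀ → pf e₀ t ε (q ++ [b]) * Bval (pf e₀ t ε) (q ++ [b]) c ≤ 2*ε) ∧
        ((q ++ [b]) <+: e₀ → pf e₀ t ε (q ++ [b]) * Bval (pf e₀ t ε) (q ++ [b]) c ≤
          max (t + 4*ε) (4*ε)) := by
      intro b c
      constructor
      · intro hnp
        obtain ⟨hext, hne⟩ := not_prefix_ext hnp
        have hpf : pf e₀ t ε (q ++ [b]) = ε := by unfold pf; rw [if_neg hne]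
        have hB := BvalN hε0 hε4 ht0 c (q ++ [b]) hext
        have hBn := hBnn c (q ++ [b])
        rw [hpf]; nlinarith
      · intro hpre
        by_cases he : q ++ [b] = e₀
        · have hpf : pf e₀ t ε (q ++ [b]) = t := by unfold pf; rw [if_pos he]
          have hB := BvalN hε0 hε4 ht0 c (q ++ [b]) (by rw [he]; exact no_ext_self)
          have hBn := hBnn c (q ++ [b])
          rw [hpf]
          refine le_trans ?_ (le_max_left _ _)
          nlinarith
        · have hpf : pf e₀ t ε (q ++ [b]) = ε := by unfold pf; rw [if_neg he]
          have hB := BvalY (e₀ := e₀) hε0 hε4 ht0 ht1 c (q ++ [b])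
          have hBn := hBnn c (q ++ [b])
          rw [hpf]
          refine le_trans ?_ (le_max_right _ _)
          nlinarith
    have hl := hterm false l
    have ht'' := hterm true t'
    have hnot : ¬ ((q ++ [false]) <+: e₀ ∧ (q ++ [true]) <+: e₀) := by
      rintro ⟨h1, h2⟩
      have h3 : (q ++ [false]) <+: (q ++ [true]) :=
        List.prefix_of_prefix_length_le h1 h2 (by simp)
      have h4 : q ++ [false] = q ++ [true] := List.IsPrefix.eq_of_length h3 (by simp)
      simpa using h4
    have hmax : max (t + 4*ε) (4*ε) ≤ t + 4*ε := by
      apply max_le le_rfl; linarith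
    refine ⟨?_, ihl _, iht _⟩
    by_cases hf : (q ++ [false]) <+: e₀ <;> by_cases htt : (q ++ [true]) <+: e₀
    · exact absurd ⟨hf, htt⟩ hnot
    · have h1 := hl.2 hf; have h2 := ht''.1 htt
      have := hmax; linarith
    · have h1 := hl.1 hf; have h2 := ht''.2 htt
      have := hmax; linarith
    · have h1 := hl.1 hf; have h2 := ht''.1 htt; linarith

end PTree

/-- Let `r ≥ 3`, `A ∈ 𝒯_r`, `e₀ ∈ E(A)`, let `Φ_A` be the polynomial map
inverting `Ψ_A`, and let `t` be a real number with `0 < t < 1`.  Then there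
exists an `A`-admissible tuple `𝔭 = (p_e)_{e∈E(A)}` of positive reals with
`p_{e₀} = t`. -/
theorem stmt_13 {r : ℕ} (hr : 3 ≤ r) (A : PTree r) (hA : A.IsTree)
    (e₀ : List Bool) (he₀ : A.IsEdge e₀)
    (P : Fin r → MvPolynomial A.Idx ℂ)
    (hPhiPsi : A.PhiPsiId P) (hPsiPhi : A.PsiPhiId P)
    (t : ℝ) (ht0 : 0 < t) (ht1 : t < 1) :
    ∃ p : A.Edge → ℝ, (∀ e, 0 < p e) ∧ p ⟨e₀, he₀⟩ = t ∧ A.Admissible P p := by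
  classical
  set ε : ℝ := min ((1-t)/7) (1/8) with hεdef
  have hε0 : 0 < ε := lt_min (by linarith) (by norm_num)
  have hε8 : ε ≤ 1/8 := min_le_right _ _
  have hε7 : ε ≤ (1-t)/7 := min_le_left _ _
  have hts : t + 6*ε < 1 := by linarith
  refine ⟨fun e => PTree.pf e₀ t ε e.1, ?_, ?_, ?_⟩
  · intro e
    unfold PTree.pf
    dsimp only
    split
    · exact ht0
    · exact hε0
  · simp [PTree.pf]
  · intro w hw1 hw2
    have hpsi := hPsiPhi w hw1 (fun e => (hw2 e).1)
    set z := A.phiMap P w with hzdef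
    have hx : PTree.xval z A = w.2.1 := congrArg (fun u => u.2.1) hpsi
    have hzeta : (fun e : A.Edge => A.zetaAt z e.1) = w.2.2 :=
      congrArg (fun u => u.2.2) hpsi
    have hz : ∀ (q : List Bool), A.IsEdge q →
        A.zetaAt z q ≠ 0 ∧ ‖A.zetaAt z q‖ < PTree.pf e₀ t ε q := by
      intro q hq
      have h := congrFun hzeta ⟨q, hq⟩
      rw [h]
      exact ⟨(hw2 ⟨q, hq⟩).1, (hw2 ⟨q, hq⟩).2⟩
    obtain ⟨nd, hlen⟩ := hA
    have hpnn := PTree.pf_nonneg (e₀ := e₀) ht0.le hε0.le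
    obtain ⟨hG, hN⟩ := PTree.build A _ hpnn z hz A [] (by cases A <;> rfl) (fun l t' _ => hx ▸ hw1)
    have hS := PTree.smallAll (e₀ := e₀) hε0.le hε8 ht0.le ht1.le hts A []
    have hmem : ∀ i : Fin r, i ∈ A.leafLabels := by
      intro i
      have hcard : A.leafLabels.toFinset = Finset.univ := by
        apply Finset.eq_univ_of_card
        rw [List.toFinset_card_of_nodup nd, hlen, Fintype.card_fin]
      rw [← List.mem_toFinset, hcard]
      exact Finset.mem_univ i
    intro i j hij
    exact PTree.sep _ hpnn z A [] hG hN hS nd i (hmem i) j (hmem j) hij
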